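/- arXiv:2305.02795 — 2 statements merged into one kernel-verified Lean document; each statement's English description precedes it below -/
import Mathlib

section
/- Suppose that for every class k ∈ {1,…,q}, the per-class pseudo-labeling error satisfies (1/m)·Σ_{j=1}^m |1[g_{jk} ≥ τ_k] − y_{jk}| ≤ ε. Then |R̂'_u − R̂_u| ≤ q·B·ε, where R̂_u = (1/m)·Σ_{j=1}^m Σ_{k=1}^q [ y_{jk}·ℓ1(g_{jk}) + (1 − y_{jk})·ℓ0(g_{jk}) ] is the unlabeled empirical risk with true labels and R̂'_u = (1/m)·Σ_{j=1}^m Σ_{k=1}^q [ 1[g_{jk} ≥ τ_k]·ℓ1(g_{jk}) + 1[g_{jk} < τ_k]·ℓ0(g_{jk}) ] is the unlabeled empirical risk with pseudo-labels. -/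
/-- Lemma 2 in the appendix of the paper: if the per-class pseudo-labeling error is at
most `ε` for every class `k`, then the unlabeled empirical risk computed with
pseudo-labels `R̂'_u` and the one computed with true labels `R̂_u` differ by at most
`q·B·ε`. -/
theorem pseudo_risk_close_to_true_risk
    (m q : ℕ) (hm : 1 ≤ m) (hq : 1 ≤ q)
    (B ε : ℝ) (hB : 0 < B)
    (y : Fin m → Fin q → ℝ) (hy : ∀ j k, y j k = 0 ∨ y j k = 1)
    (g : Fin m → Fin q → ℝ) (τ : Fin q → ℝ)
    (ℓ1 ℓ0 : ℝ → ℝ)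
    (hℓ1 : ∀ t, 0 ≤ ℓ1 t ∧ ℓ1 t ≤ B)
    (hℓ0 : ∀ t, 0 ≤ ℓ0 t ∧ ℓ0 t ≤ B)
    (herr : ∀ k, (1 / (m : ℝ)) *
      ∑ j, |(if τ k ≤ g j k then (1 : ℝ) else 0) - y j k| ≤ ε) :
    |(1 / (m : ℝ)) * ∑ j, ∑ k,
        ((if τ k ≤ g j k then (1 : ℝ) else 0) * ℓ1 (g j k)
          + (if g j k < τ k then (1 : ℝ) else 0) * ℓ0 (g j k))
      - (1 / (m : ℝ)) * ∑ j, ∑ k,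
        (y j k * ℓ1 (g j k) + (1 - y j k) * ℓ0 (g j k))|
      ≤ q * B * ε := by
  have hmpos : (0 : ℝ) < m := by exact_mod_cast hm
  have hinv : (0 : ℝ) < 1 / m := by positivity
  set d : Fin m → Fin q → ℝ := fun j k =>
    ((if τ k ≤ g j k then (1 : ℝ) else 0) - y j k) * (ℓ1 (g j k) - ℓ0 (g j k)) with hd
  have key : (1 / (m : ℝ)) * ∑ j, ∑ k,
        ((if τ k ≤ g j k then (1 : ℝ) else 0) * ℓ1 (g j k)
          + (if g j k < τ k then (1 : ℝ) else 0) * ℓ0 (g j k))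
      - (1 / (m : ℝ)) * ∑ j, ∑ k,
        (y j k * ℓ1 (g j k) + (1 - y j k) * ℓ0 (g j k))
      = (1 / (m : ℝ)) * ∑ j, ∑ k, d j k := by
    rw [← mul_sub, ← Finset.sum_sub_distrib]
    congr 1
    refine Finset.sum_congr rfl fun j _ => ?_
    rw [← Finset.sum_sub_distrib]
    refine Finset.sum_congr rfl fun k _ => ?_
    by_cases h : τ k ≤ g j k
    · simp [hd, h, not_lt.mpr h]; ring
    · simp [hd, h, not_le.mp h]; ring
  rw [key, abs_mul, abs_of_pos hinv]
  have habs : |∑ j, ∑ k, d j k| ≤ ∑ j, ∑ k, |d j k| := by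
    calc |∑ j, ∑ k, d j k| ≤ ∑ j, |∑ k, d j k| := Finset.abs_sum_le_sum_abs _ _
      _ ≤ ∑ j, ∑ k, |d j k| :=
        Finset.sum_le_sum fun j _ => Finset.abs_sum_le_sum_abs _ _
  calc (1 / (m : ℝ)) * |∑ j, ∑ k, d j k| ≤ (1 / (m : ℝ)) * ∑ j, ∑ k, |d j k| := by
        exact mul_le_mul_of_nonneg_left habs hinv.le
    _ = ∑ k, (1 / (m : ℝ)) * ∑ j, |d j k| := by
        rw [Finset.sum_comm, Finset.mul_sum]
    _ ≤ ∑ k, B * ε := by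
        refine Finset.sum_le_sum fun k _ => ?_
        have h1 : (1 / (m : ℝ)) * ∑ j, |d j k|
            ≤ (1 / (m : ℝ)) * ∑ j, |(if τ k ≤ g j k then (1 : ℝ) else 0) - y j k| * B := by
          refine mul_le_mul_of_nonneg_left (Finset.sum_le_sum fun j _ => ?_) hinv.le
          rw [hd, abs_mul]
          refine mul_le_mul_of_nonneg_left ?_ (abs_nonneg _)
          rw [abs_sub_le_iff]
          constructor
          · linarith [(hℓ1 (g j k)).2, (hℓ0 (g j k)).1]
          · linarith [(hℓ0 (g j k)).2, (hℓ1 (g j k)).1]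
        have h2 : (1 / (m : ℝ)) * ∑ j, |(if τ k ≤ g j k then (1 : ℝ) else 0) - y j k| * B
            = B * ((1 / (m : ℝ)) * ∑ j, |(if τ k ≤ g j k then (1 : ℝ) else 0) - y j k|) := by
          rw [← Finset.sum_mul]; ring
        have h3 := herr k
        calc (1 / (m : ℝ)) * ∑ j, |d j k|
            ≤ B * ((1 / (m : ℝ)) * ∑ j, |(if τ k ≤ g j k then (1 : ℝ) else 0) - y j k|) := by
              rw [← h2]; exact h1
          _ ≤ B * ε := mul_le_mul_of_nonneg_left h3 hB.le
    _ = q * B * ε := by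
        rw [Finset.sum_const, Finset.card_univ, Fintype.card_fin, nsmul_eq_mul]; ring
end

section
/- Suppose that for every class k ∈ {1,…,q}, the per-class pseudo-labeling error satisfies (1/m)·Σ_{j=1}^m |1[g_{jk} ≥ τ_k] − y_{jk}| ≤ ε. Then the pseudo-label empirical risk is upper bounded by the true-label empirical risk plus q·B·ε: R̂'_u ≤ R̂_u + q·B·ε, where R̂_u = (1/m)·Σ_{j=1}^m Σ_{k=1}^q [ y_{jk}·ℓ1(g_{jk}) + (1 − y_{jk})·ℓ0(g_{jk}) ] and R̂'_u = (1/m)·Σ_{j=1}^m Σ_{k=1}^q [ 1[g_{jk} ≥ τ_k]·ℓ1(g_{jk}) + 1[g_{jk} < τ_k]·ℓ0(g_{jk}) ]. -/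
/-- Upper-bound direction in the proof of Lemma 2: the pseudo-label empirical risk
`R̂'_u` is at most the true-label empirical risk `R̂_u` plus `q·B·ε`. -/
theorem pseudo_risk_upper_bound
    (m q : ℕ) (hm : 1 ≤ m) (hq : 1 ≤ q)
    (B ε : ℝ) (hB : 0 < B)
    (y : Fin m → Fin q → ℝ) (hy : ∀ j k, y j k = 0 ∨ y j k = 1)
    (g : Fin m → Fin q → ℝ) (τ : Fin q → ℝ)
    (ℓ1 ℓ0 : ℝ → ℝ)
    (hℓ1 : ∀ t, 0 ≤ ℓ1 t ∧ ℓ1 t ≤ B)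
    (hℓ0 : ∀ t, 0 ≤ ℓ0 t ∧ ℓ0 t ≤ B)
    (herr : ∀ k, (1 / (m : ℝ)) *
      ∑ j, |(if τ k ≤ g j k then (1 : ℝ) else 0) - y j k| ≤ ε) :
    (1 / (m : ℝ)) * ∑ j, ∑ k,
        ((if τ k ≤ g j k then (1 : ℝ) else 0) * ℓ1 (g j k)
          + (if g j k < τ k then (1 : ℝ) else 0) * ℓ0 (g j k))
      ≤ (1 / (m : ℝ)) * ∑ j, ∑ k,
          (y j k * ℓ1 (g j k) + (1 - y j k) * ℓ0 (g j k))
        + q * B * ε := by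
  have hm0 : (0:ℝ) < (m:ℝ) := by exact_mod_cast Nat.lt_of_lt_of_le Nat.zero_lt_one hm
  have key : ∀ j k,
      ((if τ k ≤ g j k then (1 : ℝ) else 0) * ℓ1 (g j k)
        + (if g j k < τ k then (1 : ℝ) else 0) * ℓ0 (g j k))
      ≤ (y j k * ℓ1 (g j k) + (1 - y j k) * ℓ0 (g j k))
        + B * |(if τ k ≤ g j k then (1 : ℝ) else 0) - y j k| := by
    intro j k
    set a : ℝ := if τ k ≤ g j k then (1:ℝ) else 0 with ha
    have hneg : (if g j k < τ k then (1:ℝ) else 0) = 1 - a := by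
      rw [ha]; by_cases h : τ k ≤ g j k
      · simp [h, not_lt.mpr h]
      · simp [h, lt_of_not_ge h]
    rw [hneg]
    have h1 := hℓ1 (g j k); have h0 := hℓ0 (g j k)
    have habs : |ℓ1 (g j k) - ℓ0 (g j k)| ≤ B := by
      rw [abs_le]; constructor <;> linarith [h1.1, h1.2, h0.1, h0.2]
    have : a * ℓ1 (g j k) + (1 - a) * ℓ0 (g j k)
        - (y j k * ℓ1 (g j k) + (1 - y j k) * ℓ0 (g j k))
        = (a - y j k) * (ℓ1 (g j k) - ℓ0 (g j k)) := by ring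
    nlinarith [abs_mul (a - y j k) (ℓ1 (g j k) - ℓ0 (g j k)),
      le_abs_self ((a - y j k) * (ℓ1 (g j k) - ℓ0 (g j k))),
      mul_le_mul_of_nonneg_left habs (abs_nonneg (a - y j k)),
      abs_nonneg (a - y j k)]
  have step1 : (∑ j, ∑ k,
        ((if τ k ≤ g j k then (1 : ℝ) else 0) * ℓ1 (g j k)
          + (if g j k < τ k then (1 : ℝ) else 0) * ℓ0 (g j k)))
      ≤ (∑ j, ∑ k, (y j k * ℓ1 (g j k) + (1 - y j k) * ℓ0 (g j k)))
        + ∑ j, ∑ k, B * |(if τ k ≤ g j k then (1 : ℝ) else 0) - y j k| := by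
    rw [← Finset.sum_add_distrib]
    refine Finset.sum_le_sum fun j _ => ?_
    rw [← Finset.sum_add_distrib]
    exact Finset.sum_le_sum fun k _ => key j k
  have step2 : (1 / (m : ℝ)) *
      (∑ j, ∑ k, B * |(if τ k ≤ g j k then (1 : ℝ) else 0) - y j k|)
      ≤ q * B * ε := by
    rw [Finset.sum_comm]
    have : (1 / (m : ℝ)) *
        (∑ k, ∑ j, B * |(if τ k ≤ g j k then (1 : ℝ) else 0) - y j k|)
        = ∑ k : Fin q, B * ((1 / (m : ℝ)) *
          ∑ j, |(if τ k ≤ g j k then (1 : ℝ) else 0) - y j k|) := by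
      rw [Finset.mul_sum]
      refine Finset.sum_congr rfl fun k _ => ?_
      rw [← Finset.mul_sum]; ring
    rw [this]
    calc ∑ k : Fin q, B * ((1 / (m : ℝ)) *
          ∑ j, |(if τ k ≤ g j k then (1 : ℝ) else 0) - y j k|)
        ≤ ∑ _k : Fin q, B * ε :=
          Finset.sum_le_sum fun k _ =>
            mul_le_mul_of_nonneg_left (herr k) hB.le
      _ = q * B * ε := by
          rw [Finset.sum_const, Finset.card_univ, Fintype.card_fin]; ring
  calc (1 / (m : ℝ)) * ∑ j, ∑ k,
        ((if τ k ≤ g j k then (1 : ℝ) else 0) * ℓ1 (g j k)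
          + (if g j k < τ k then (1 : ℝ) else 0) * ℓ0 (g j k))
      ≤ (1 / (m : ℝ)) * ((∑ j, ∑ k, (y j k * ℓ1 (g j k) + (1 - y j k) * ℓ0 (g j k)))
        + ∑ j, ∑ k, B * |(if τ k ≤ g j k then (1 : ℝ) else 0) - y j k|) :=
        mul_le_mul_of_nonneg_left step1 (by positivity)
    _ = (1 / (m : ℝ)) * (∑ j, ∑ k, (y j k * ℓ1 (g j k) + (1 - y j k) * ℓ0 (g j k)))
        + (1 / (m : ℝ)) * (∑ j, ∑ k, B * |(if τ k ≤ g j k then (1 : ℝ) else 0) - y j k|) := by ring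
    _ ≤ _ := by linarith [step2]
end
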